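/- Let Ψ : [0,T] → [0,∞) be continuous and let K(t) = sup_{0≤s≤T} Ψ(s) − sup_{t≤s≤T} Ψ(s). Then ∫₀ᵀ 𝟙_{Ψ(t) = 0} dK(t) = 0. -/

import Mathlib

open MeasureTheory Set

/-- The compensator `K(t) = sup_{[0,T]} Ψ − sup_{[t,T]} Ψ` does not charge the set where
`Ψ` vanishes: `∫₀ᵀ 𝟙_{Ψ(t)=0} dK(t) = 0`. -/
theorem compensator_not_charging_zero_set (T : ℝ) (hT : 0 < T)
    (Ψ : ℝ → ℝ) (hΨcont : Continuous Ψ) (hΨpos : ∀ t, 0 ≤ Ψ t)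
    (K : ℝ → ℝ)
    (hK : ∀ t, K t = sSup (Ψ '' Icc 0 T) - sSup (Ψ '' Icc t T)) :
    ∀ κ : StieltjesFunction ℝ, Continuous ⇑κ → EqOn (⇑κ) K (Icc 0 T) →
      (∫ t in Icc 0 T, Set.indicator {t : ℝ | Ψ t = 0} (fun _ => (1 : ℝ)) t ∂κ.measure)
        = 0 := by
  intro κ hκcont hκK
  set M : ℝ → ℝ := fun s => sSup (Ψ '' Icc s T) with hM
  -- basic facts about M
  have hbdd : ∀ s : ℝ, BddAbove (Ψ '' Icc s T) := fun s =>
    (isCompact_Icc.image hΨcont).bddAbove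
  have hne : ∀ s : ℝ, s ≤ T → (Ψ '' Icc s T).Nonempty := fun s hs =>
    (nonempty_Icc.2 hs).image Ψ
  have hleM : ∀ s : ℝ, ∀ x ∈ Icc s T, Ψ x ≤ M s := fun s x hx =>
    le_csSup (hbdd s) (mem_image_of_mem Ψ hx)
  have hanti : ∀ s s' : ℝ, s ≤ s' → s' ≤ T → M s' ≤ M s := fun s s' h h' =>
    csSup_le_csSup (hbdd s) (hne s' h') (image_mono (f := Ψ) (Icc_subset_Icc_left h))
  have hMpos : ∀ s : ℝ, s ≤ T → 0 ≤ M s := fun s hs =>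
    le_trans (hΨpos s) (hleM s s ⟨le_refl s, hs⟩)
  -- leftLim of κ equals κ
  have hleft : ∀ a : ℝ, Function.leftLim (⇑κ) a = κ a := fun a =>
    leftLim_eq_of_tendsto (h := nhdsLT_neBot a)
      ((hκcont.tendsto a).mono_left nhdsWithin_le_nhds)
  -- measure of an Icc inside [0,T] where M is constant is zero
  have hmeasIcc : ∀ a b : ℝ, a ∈ Icc (0:ℝ) T → b ∈ Icc (0:ℝ) T → M a = M b →
      κ.measure (Icc a b) = 0 := by
    intro a b ha hb hab
    rw [κ.measure_Icc, hleft, hκK hb, hκK ha, hK, hK]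
    rw [show sSup (Ψ '' Icc a T) = M a from rfl, show sSup (Ψ '' Icc b T) = M b from rfl, hab]
    simp
  -- the zero set of M in [0,T] has κ-measure zero
  have hA : κ.measure {s | s ∈ Icc (0:ℝ) T ∧ M s = 0} = 0 := by
    set A := {s | s ∈ Icc (0:ℝ) T ∧ M s = 0} with hAdef
    rcases A.eq_empty_or_nonempty with h | h
    · simp [h]
    · have hAbdd : BddBelow A := ⟨0, fun s hs => hs.1.1⟩
      set t₀ := sInf A with ht₀
      have ht₀mem : t₀ ∈ Icc (0:ℝ) T := by
        obtain ⟨a, ha⟩ := h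
        exact ⟨le_csInf ⟨a, ha⟩ fun s hs => hs.1.1,
          le_trans (csInf_le hAbdd ha) ha.1.2⟩
      -- Ψ vanishes on (t₀, T]
      have hΨz : ∀ s, t₀ < s → s ≤ T → Ψ s = 0 := by
        intro s hs hsT
        obtain ⟨a, haA, has⟩ := exists_lt_of_csInf_lt h hs
        have hMs : M s ≤ M a := hanti a s has.le hsT
        have : Ψ s ≤ 0 := le_trans (hleM s s ⟨le_refl s, hsT⟩) (hMs.trans_eq haA.2)
        exact le_antisymm this (hΨpos s)
      -- Ψ vanishes at t₀ too (by continuity, or because t₀ ∈ A)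
      have hΨt₀ : Ψ t₀ = 0 := by
        rcases eq_or_lt_of_le ht₀mem.2 with hEq | hLt
        · -- t₀ = T : then A = {T} essentially, t₀ ∈ A
          obtain ⟨a, ha⟩ := h
          have haT : a = t₀ := le_antisymm (hEq ▸ ha.1.2) (csInf_le hAbdd ha)
          have : M t₀ = 0 := haT ▸ ha.2
          exact le_antisymm (le_trans (hleM t₀ t₀ ⟨le_refl _, ht₀mem.2⟩) this.le) (hΨpos t₀)
        · -- t₀ < T : Ψ = 0 on (t₀, T], use continuity
          have heq : EqOn Ψ (fun _ => (0:ℝ)) (Ioc t₀ T) := fun x hx => hΨz x hx.1 hx.2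
          have hcl : EqOn Ψ (fun _ => (0:ℝ)) (closure (Ioc t₀ T)) :=
            heq.closure hΨcont continuous_const
          have : t₀ ∈ closure (Ioc t₀ T) := by
            rw [closure_Ioc hLt.ne]
            exact ⟨le_refl _, ht₀mem.2⟩
          exact hcl this
      have hMt₀ : M t₀ = 0 := by
        refine le_antisymm (csSup_le (hne t₀ ht₀mem.2) ?_) (hMpos t₀ ht₀mem.2)
        rintro y ⟨x, hx, rfl⟩
        rcases eq_or_lt_of_le hx.1 with hEq | hLt
        · exact (hEq ▸ hΨt₀).le
        · exact (hΨz x hLt hx.2).le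
      have hsub : A ⊆ Icc t₀ T := fun s hs => ⟨csInf_le hAbdd hs, hs.1.2⟩
      refine measure_mono_null hsub (hmeasIcc t₀ T ht₀mem ⟨hT.le, le_refl T⟩ ?_)
      rw [hMt₀]
      refine (le_antisymm (csSup_le (hne T (le_refl T)) ?_) (hMpos T (le_refl T))).symm
      rintro y ⟨x, hx, rfl⟩
      have : x = T := le_antisymm hx.2 hx.1
      rcases eq_or_lt_of_le ht₀mem.2 with hEq | hLt
      · exact (this ▸ hEq ▸ hΨt₀ : Ψ x = 0).le
      · exact (hΨz x (this ▸ hLt) this.le).le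
  -- the part where M > 0 : locally null
  have hB : κ.measure {t | Ψ t = 0 ∧ t ∈ Icc (0:ℝ) T ∧ 0 < M t} = 0 := by
    set B := {t | Ψ t = 0 ∧ t ∈ Icc (0:ℝ) T ∧ 0 < M t} with hBdef
    refine measure_null_of_locally_null B fun t ht => ?_
    obtain ⟨hΨt, htIcc, hMt⟩ := ht
    have hΨlt : Ψ t < M t := hΨt ▸ hMt
    -- find an open interval around t where Ψ < M t
    have hopen : {x | Ψ x < M t} ∈ nhds t :=
      (isOpen_lt hΨcont continuous_const).mem_nhds hΨlt
    obtain ⟨a, b, ⟨hat, htb⟩, hab⟩ := mem_nhds_iff_exists_Ioo_subset.1 hopen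
    -- M is constant on Ioo a b ∩ Icc 0 T
    have hconst : ∀ x ∈ Ioo a b ∩ Icc (0:ℝ) T, M x = M t := by
      rintro x ⟨hxab, hxIcc⟩
      rcases le_total x t with hxt | htx
      · refine le_antisymm ?_ (hanti x t hxt htIcc.2)
        refine csSup_le (hne x hxIcc.2) ?_
        rintro y ⟨z, hz, rfl⟩
        rcases le_total z t with hzt | htz
        · exact (hab ⟨lt_of_lt_of_le hxab.1 hz.1, lt_of_le_of_lt hzt htb⟩).le
        · exact hleM t z ⟨htz, hz.2⟩
      · refine le_antisymm (hanti t x htx hxIcc.2) ?_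
        -- the sup over [t,T] is attained at some point ≥ b > x
        obtain ⟨x₀, hx₀mem, hx₀max⟩ :=
          isCompact_Icc.exists_isMaxOn (nonempty_Icc.2 htIcc.2) hΨcont.continuousOn
        have hx₀sup : Ψ x₀ = M t :=
          le_antisymm (hleM t x₀ hx₀mem)
            (csSup_le (hne t htIcc.2) (by rintro y ⟨z, hz, rfl⟩; exact hx₀max hz))
        have hx₀b : b ≤ x₀ := by
          by_contra hcon
          push_neg at hcon
          have : Ψ x₀ < M t := hab ⟨lt_of_lt_of_le hat hx₀mem.1, hcon⟩
          exact absurd hx₀sup this.ne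
        have : x₀ ∈ Icc x T := ⟨le_trans hxab.2.le hx₀b, hx₀mem.2⟩
        calc M t = Ψ x₀ := hx₀sup.symm
          _ ≤ M x := hleM x x₀ this
    -- build the small closed interval
    set a' := max ((a + t) / 2) 0 with ha'
    set b' := min ((t + b) / 2) T with hb'
    have haa' : a < a' := lt_max_of_lt_left (by linarith)
    have ha't : a' ≤ t := max_le (by linarith) htIcc.1
    have htb' : t ≤ b' := le_min (by linarith) htIcc.2
    have hb'b : b' < b := min_lt_of_left_lt (by linarith)
    have ha'mem : a' ∈ Ioo a b ∩ Icc (0:ℝ) T :=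
      ⟨⟨haa', lt_of_le_of_lt (ha't.trans htb') hb'b⟩, ⟨le_max_right _ _, ha't.trans htIcc.2⟩⟩
    have hb'mem : b' ∈ Ioo a b ∩ Icc (0:ℝ) T :=
      ⟨⟨lt_of_lt_of_le haa' (ha't.trans htb'), hb'b⟩, ⟨htIcc.1.trans htb', min_le_right _ _⟩⟩
    refine ⟨Icc a' b', ?_, ?_⟩
    · rw [mem_nhdsWithin_iff_exists_mem_nhds_inter]
      refine ⟨Ioo ((a + t) / 2) ((t + b) / 2),
        Ioo_mem_nhds (by linarith) (by linarith), ?_⟩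
      rintro x ⟨hx1, hx2⟩
      exact ⟨max_le hx1.1.le hx2.2.1.1, le_min hx1.2.le hx2.2.1.2⟩
    · exact hmeasIcc a' b' ha'mem.2 hb'mem.2
        ((hconst a' ha'mem).trans (hconst b' hb'mem).symm)
  -- combine
  have hnull : κ.measure ({t | Ψ t = 0} ∩ Icc 0 T) = 0 := by
    refine measure_mono_null (fun t ht => ?_)
      (measure_union_null hB hA)
    rcases eq_or_lt_of_le (hMpos t ht.2.2) with hEq | hLt
    · exact Or.inr ⟨ht.2, hEq.symm⟩
    · exact Or.inl ⟨ht.1, ht.2, hLt⟩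
  have hZmeas : MeasurableSet {t : ℝ | Ψ t = 0} :=
    (isClosed_eq hΨcont continuous_const).measurableSet
  have : (κ.measure.restrict (Icc 0 T)) {t : ℝ | Ψ t = 0} = 0 := by
    rw [Measure.restrict_apply hZmeas]
    exact hnull
  calc (∫ t in Icc 0 T, Set.indicator {t : ℝ | Ψ t = 0} (fun _ => (1 : ℝ)) t ∂κ.measure)
      = ∫ t in {t : ℝ | Ψ t = 0}, (1:ℝ) ∂(κ.measure.restrict (Icc 0 T)) := by
        rw [integral_indicator hZmeas]
    _ = 0 := by
        rw [setIntegral_const, measureReal_def, this]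
        simp
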